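/- Let A be a C*-algebra, K a complex Hilbert space, π : A → B(K) a star-algebra homomorphism, and ξ ∈ K a cyclic vector for π (i.e., the closed linear span of {π(a)ξ : a ∈ A} together with ξ is all of K). If I is a closed two-sided ideal of A such that ⟨π(a)ξ, ξ⟩ = 0 for all a ∈ I, then π(a) = 0 for all a ∈ I. -/

import Mathlib

/-- let `A` be a C*-algebra, `π : A → B(K)` a representation on a complex Hilbert
space `K`, and `ξ ∈ K` a cyclic vector for `π`.  If `I` is a closed two-sided ideal of `A` with
`⟨π(a)ξ, ξ⟩ = 0` for all `a ∈ I`, then `π(a) = 0` for all `a ∈ I`. -/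
theorem stmt9 {A : Type*} [NonUnitalCStarAlgebra A]
    {K : Type*} [NormedAddCommGroup K] [InnerProductSpace ℂ K] [CompleteSpace K]
    (π : A →⋆ₙₐ[ℂ] (K →L[ℂ] K)) (ξ : K)
    (hcyclic : (Submodule.span ℂ (Set.range (fun a : A => π a ξ) ∪ {ξ})).topologicalClosure = ⊤)
    (I : TwoSidedIdeal A) (hIclosed : IsClosed (I : Set A))
    (hvanish : ∀ a ∈ I, (inner ℂ (π a ξ) ξ : ℂ) = 0) :
    ∀ a ∈ I, π a = 0 := by
  -- Step 1: for every `b ∈ I`, `π b ξ = 0`.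
  have step1 : ∀ b ∈ I, π b ξ = 0 := by
    intro b hb
    have key : ∀ z : K, (inner ℂ (π b ξ) z : ℂ) = 0 := by
      have hsub : (Set.range (fun a : A => π a ξ) ∪ {ξ}) ⊆
          (LinearMap.ker (innerSL ℂ (π b ξ) : K →ₗ[ℂ] ℂ) : Set K) := by
        rintro z (⟨c, rfl⟩ | hz)
        · have : (inner ℂ (π c ξ) (π b ξ) : ℂ) = 0 := by
            calc (inner ℂ (π c ξ) (π b ξ) : ℂ)
                = inner ℂ ((ContinuousLinearMap.adjoint (π (star c))) ξ) (π b ξ) := by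
                  rw [← ContinuousLinearMap.star_eq_adjoint, ← map_star, star_star]
              _ = inner ℂ ξ (π (star c) (π b ξ)) := ContinuousLinearMap.adjoint_inner_left _ _ _
              _ = inner ℂ ξ (π (star c * b) ξ) := by rw [map_mul]; rfl
              _ = 0 := by
                  rw [← inner_conj_symm, hvanish _ (I.mul_mem_left _ _ hb), map_zero]
          show (inner ℂ (π b ξ) (π c ξ) : ℂ) = 0
          rw [← inner_conj_symm, this, map_zero]
        · simp only [Set.mem_singleton_iff] at hz
          subst hz
          exact hvanish b hb
      have hker : (Submodule.span ℂ (Set.range (fun a : A => π a ξ) ∪ {ξ})).topologicalClosure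
          ≤ LinearMap.ker (innerSL ℂ (π b ξ) : K →ₗ[ℂ] ℂ) :=
        Submodule.topologicalClosure_minimal _ (Submodule.span_le.2 hsub)
          (ContinuousLinearMap.isClosed_ker _)
      intro z
      have : z ∈ LinearMap.ker (innerSL ℂ (π b ξ) : K →ₗ[ℂ] ℂ) := hker (hcyclic ▸ Submodule.mem_top)
      exact this
    have := key (π b ξ)
    rwa [inner_self_eq_zero] at this
  -- Step 2: for `a ∈ I`, `π a = 0`.
  intro a ha
  have hsub : (Set.range (fun c : A => π c ξ) ∪ {ξ}) ⊆ (LinearMap.ker (π a : K →ₗ[ℂ] K) : Set K) := by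
    rintro z (⟨c, rfl⟩ | hz)
    · show π a (π c ξ) = 0
      have : π a (π c ξ) = π (a * c) ξ := by rw [map_mul]; rfl
      rw [this]
      exact step1 _ (I.mul_mem_right _ _ ha)
    · simp only [Set.mem_singleton_iff] at hz
      subst hz
      exact step1 a ha
  have hker : (Submodule.span ℂ (Set.range (fun c : A => π c ξ) ∪ {ξ})).topologicalClosure
      ≤ LinearMap.ker (π a : K →ₗ[ℂ] K) :=
    Submodule.topologicalClosure_minimal _ (Submodule.span_le.2 hsub)
      (ContinuousLinearMap.isClosed_ker _)
  ext x
  have : x ∈ LinearMap.ker (π a : K →ₗ[ℂ] K) := hker (hcyclic ▸ Submodule.mem_top)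
  simpa using this
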